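/- Let q be a prime power and p a prime with p ∤ q. Assume the MDS conjecture in the form: every linear code over F_q of length N, dimension K and minimum distance N−K+1 with 1 < K < N−1 satisfies N ≤ q+2. If q is not a primitive root modulo p and p > q+2, then μ(F_q,p) ≤ p. -/

import Mathlib

open Polynomial

/-- The ring R(F,n) = F[X]/(X^n - 1). -/
abbrev CycRing (F : Type*) [Field F] (n : ℕ) := AdjoinRoot (X ^ n - Polynomial.C (1 : F))

/-- The unique representative of degree < n of an element of F[X]/(X^n-1). -/
noncomputable def cycRep {F : Type*} [Field F] {n : ℕ} (f : CycRing F n) : F[X] :=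
  if h : n = 0 then 0
  else AdjoinRoot.modByMonicHom (monic_X_pow_sub_C (1 : F) h) f

/-- Hamming weight of an element of F[X]/(X^n-1): the number of nonzero coefficients of
its representative of degree < n. -/
noncomputable def cycWt {F : Type*} [Field F] {n : ℕ} (f : CycRing F n) : ℕ :=
  (cycRep f).support.card

/-- Minimum distance of a cyclic code (ideal of F[X]/(X^n-1)). -/
noncomputable def cycDist {F : Type*} [Field F] {n : ℕ} (I : Ideal (CycRing F n)) : ℕ :=
  sInf {w | ∃ f ∈ I, f ≠ 0 ∧ cycWt f = w}

/-- Dimension of a cyclic code as an F-vector space. -/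
noncomputable def cycDim (F : Type*) [Field F] {n : ℕ} (I : Ideal (CycRing F n)) : ℕ :=
  Module.finrank F (Submodule.restrictScalars F I)

/-- The invariant μ(F,n). -/
noncomputable def mu (F : Type*) [Field F] (n : ℕ) : ℕ :=
  sInf {w | ∃ f : CycRing F n, f ≠ 0 ∧
    cycDist (Ideal.span {f}) + cycDim F (Ideal.span {f}) = w}

/-- Hamming weight of a vector: its number of nonzero coordinates. -/
noncomputable def wt {ι α : Type*} [Zero α] (v : ι → α) : ℕ := Set.ncard {i | v i ≠ 0}

/-- Minimum distance of a linear code of length N over F. -/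
noncomputable def codeDist {F : Type*} [Field F] {N : ℕ} (Cd : Submodule F (Fin N → F)) : ℕ :=
  sInf {w | ∃ x ∈ Cd, x ≠ 0 ∧ wt x = w}

namespace MuAux
open AdjoinRoot IntermediateField
variable {F : Type*} [Field F] {n : ℕ}

lemma cycRep_eq (hn : n ≠ 0) (r : CycRing F n) :
    cycRep r = modByMonicHom (monic_X_pow_sub_C (1:F) hn) r := by
  rw [cycRep, dif_neg hn]

lemma cycRep_mk (hn : n ≠ 0) (a : F[X]) :
    cycRep (mk (X ^ n - C (1:F)) a) = a %ₘ (X ^ n - C 1) := by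
  rw [cycRep_eq hn, modByMonicHom_mk]

lemma mk_cycRep (hn : n ≠ 0) (r : CycRing F n) : mk (X ^ n - C (1:F)) (cycRep r) = r := by
  rw [cycRep_eq hn]; exact mk_leftInverse (monic_X_pow_sub_C (1:F) hn) r

lemma degree_cycRep_lt (hn : n ≠ 0) (r : CycRing F n) : (cycRep r).degree < n := by
  obtain ⟨a, rfl⟩ := mk_surjective (g := X ^ n - C (1:F)) r
  rw [cycRep_mk hn]
  have h := degree_modByMonic_lt a (monic_X_pow_sub_C (1:F) hn)
  rwa [degree_X_pow_sub_C (Nat.pos_of_ne_zero hn)] at h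

noncomputable def coeffMapL (F : Type*) [Field F] (n : ℕ) (hn : n ≠ 0) :
    CycRing F n →ₗ[F] (Fin n → F) :=
  LinearMap.pi fun i => (lcoeff F (i : ℕ)).comp (modByMonicHom (monic_X_pow_sub_C (1:F) hn))

lemma coeffMapL_apply (hn : n ≠ 0) (r : CycRing F n) (i : Fin n) :
    coeffMapL F n hn r i = (cycRep r).coeff i := by
  rw [cycRep_eq hn]; rfl

lemma coeffMapL_injective (hn : n ≠ 0) : Function.Injective (coeffMapL F n hn) := by
  intro a b h
  have hab : cycRep a = cycRep b := by
    ext j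
    by_cases hj : j < n
    · have := congrFun h ⟨j, hj⟩
      rwa [coeffMapL_apply, coeffMapL_apply] at this
    · rw [coeff_eq_zero_of_degree_lt, coeff_eq_zero_of_degree_lt] <;>
        exact lt_of_lt_of_le (degree_cycRep_lt hn _)
          (by exact_mod_cast Nat.le_of_not_lt hj)
  rw [← mk_cycRep hn a, ← mk_cycRep hn b, hab]

lemma wt_fin_coeff {g : F[X]} (hg : g.degree < (n : WithBot ℕ)) :
    wt (fun i : Fin n => g.coeff i) = g.support.card := by
  classical
  have hlt : ∀ m ∈ g.support, m < n := by
    intro m hm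
    have h1 : (m : WithBot ℕ) ≤ g.degree := le_degree_of_ne_zero (mem_support_iff.mp hm)
    exact_mod_cast lt_of_le_of_lt h1 hg
  have hset : {i : Fin n | g.coeff (i:ℕ) ≠ 0} = ↑(g.support.attachFin hlt) := by
    ext i
    simp [Finset.mem_attachFin, mem_support_iff]
  rw [wt, hset, Set.ncard_coe_finset, Finset.card_attachFin]

lemma wt_coeffMapL (hn : n ≠ 0) (r : CycRing F n) : wt (coeffMapL F n hn r) = cycWt r := by
  have h : coeffMapL F n hn r = fun i : Fin n => (cycRep r).coeff i :=
    funext (coeffMapL_apply hn r)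
  rw [h, cycWt, wt_fin_coeff (degree_cycRep_lt hn r)]

theorem key (hn : n ≠ 0) (f u : F[X]) (hf : f.Monic) (hu : u.Monic)
    (hfu : f * u = X ^ n - C 1) :
    ∃ Cd : Submodule F (Fin n → F),
      Module.finrank F Cd = u.natDegree ∧
      codeDist Cd = cycDist (Ideal.span {mk (X ^ n - C (1:F)) f}) ∧
      cycDim F (Ideal.span {mk (X ^ n - C (1:F)) f}) = u.natDegree := by
  classical
  set I : Ideal (CycRing F n) := Ideal.span {mk (X ^ n - C (1:F)) f} with hI
  set I' : Submodule F (CycRing F n) := Submodule.restrictScalars F I with hI'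
  have hfne : f ≠ 0 := hf.ne_zero
  have hndeg : f.natDegree + u.natDegree = n := by
    have h := hf.natDegree_mul hu
    rw [hfu, natDegree_X_pow_sub_C] at h
    omega
  let β : degreeLT F u.natDegree →ₗ[F] CycRing F n :=
    { toFun := fun a => mk (X ^ n - C (1:F)) ((a : F[X]) * f)
      map_add' := by
        intro a b
        show mk (X ^ n - C (1:F)) (((a + b : _) : F[X]) * f) = _
        rw [Submodule.coe_add, add_mul, map_add]
      map_smul' := by
        intro c a
        show mk (X ^ n - C (1:F)) (((c • a : _) : F[X]) * f) = _
        rw [Submodule.coe_smul, smul_mul_assoc, smul_mk]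
        rfl }
  have hβ : ∀ a : degreeLT F u.natDegree, β a = mk (X ^ n - C (1:F)) ((a : F[X]) * f) :=
    fun a => rfl
  have hβinj : Function.Injective β := by
    rw [← LinearMap.ker_eq_bot]
    apply LinearMap.ker_eq_bot'.mpr
    intro a h0
    have hdvd : (X ^ n - C (1:F)) ∣ (a : F[X]) * f := by
      rw [← AdjoinRoot.mk_eq_zero]; exact h0
    have hmem : ((a : F[X])).degree < (u.natDegree : WithBot ℕ) := mem_degreeLT.mp a.2
    by_cases hz : (a : F[X]) = 0
    · exact Subtype.ext hz
    · exfalso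
      have hdeg : ((a:F[X]) * f).degree < (X ^ n - C (1:F)).degree := by
        rw [degree_mul, degree_X_pow_sub_C (Nat.pos_of_ne_zero hn),
          degree_eq_natDegree hfne]
        calc (a:F[X]).degree + (f.natDegree : WithBot ℕ)
            < (u.natDegree : WithBot ℕ) + (f.natDegree : WithBot ℕ) := by
              exact WithBot.add_lt_add_right (by exact WithBot.coe_ne_bot) hmem
          _ = ((u.natDegree + f.natDegree : ℕ) : WithBot ℕ) := by push_cast; rfl
          _ = (n : WithBot ℕ) := by rw [add_comm u.natDegree, hndeg]
      exact (mul_ne_zero hz hfne) (eq_zero_of_dvd_of_degree_lt hdvd hdeg)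
  have hrange : LinearMap.range β = I' := by
    apply le_antisymm
    · rintro _ ⟨a, rfl⟩
      show mk (X ^ n - C (1:F)) ((a : F[X]) * f) ∈ I
      rw [map_mul]
      exact Ideal.mul_mem_left _ _ (Ideal.subset_span rfl)
    · intro z hz
      have hz' : z ∈ I := hz
      obtain ⟨c, rfl⟩ := Ideal.mem_span_singleton.mp hz'
      obtain ⟨h, rfl⟩ := mk_surjective (g := X ^ n - C (1:F)) c
      have hmem : h %ₘ u ∈ degreeLT F u.natDegree := by
        rw [mem_degreeLT]
        have h1 := degree_modByMonic_lt h hu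
        rwa [degree_eq_natDegree hu.ne_zero] at h1
      refine ⟨⟨h %ₘ u, hmem⟩, ?_⟩
      rw [hβ, ← map_mul, AdjoinRoot.mk_eq_mk]
      refine ⟨-(h /ₘ u), ?_⟩
      have hmod := modByMonic_add_div h u
      rw [← hfu]
      linear_combination f * hmod
  have e1 : Module.finrank F I' = u.natDegree := by
    rw [← hrange, ← LinearEquiv.finrank_eq (LinearEquiv.ofInjective β hβinj),
      LinearEquiv.finrank_eq (degreeLTEquiv F u.natDegree), Module.finrank_fin_fun]
  refine ⟨Submodule.map (coeffMapL F n hn) I', ?_, ?_, e1⟩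
  · rw [← LinearEquiv.finrank_eq (Submodule.equivMapOfInjective _ (coeffMapL_injective hn) I')]
    exact e1
  · have hsets : {w | ∃ x ∈ Submodule.map (coeffMapL F n hn) I', x ≠ 0 ∧ wt x = w}
        = {w | ∃ r ∈ I, r ≠ 0 ∧ cycWt r = w} := by
      ext w
      constructor
      · rintro ⟨x, hx, hxne, rfl⟩
        obtain ⟨r, hr, rfl⟩ := hx
        exact ⟨r, hr, fun h => hxne (by rw [h, map_zero]), (wt_coeffMapL hn r).symm⟩
      · rintro ⟨r, hr, hrne, rfl⟩
        refine ⟨coeffMapL F n hn r, ⟨r, hr, rfl⟩, ?_, wt_coeffMapL hn r⟩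
        intro h
        exact hrne (coeffMapL_injective hn (by rw [h, map_zero]))
    rw [codeDist, cycDist, hsets]

theorem singleton_bound {N K : ℕ} (Cd : Submodule F (Fin N → F))
    (hfr : Module.finrank F Cd = K) (h1 : 1 ≤ K) (h2 : K ≤ N) :
    codeDist Cd ≤ N - K + 1 := by
  classical
  have hKN : K - 1 < N := by omega
  have hle : K - 1 ≤ N := by omega
  let π : Cd →ₗ[F] (Fin (K-1) → F) :=
    LinearMap.pi fun j => (LinearMap.proj (Fin.castLE hle j)).comp Cd.subtype
  have hninj : ¬ Function.Injective π := by
    intro hinj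
    have := LinearMap.finrank_le_finrank_of_injective hinj
    rw [hfr, Module.finrank_fin_fun] at this
    omega
  obtain ⟨a, b, hab, hne⟩ := Function.not_injective_iff.mp hninj
  set x := a - b with hx
  have hx0 : π x = 0 := by rw [hx, map_sub, hab, sub_self]
  have hxne : x ≠ 0 := sub_ne_zero.mpr hne
  have hxvne : (x : Fin N → F) ≠ 0 := fun h => hxne (Subtype.ext h)
  have hzero : ∀ j : Fin (K-1), (x : Fin N → F) (Fin.castLE hle j) = 0 :=
    fun j => congrFun hx0 j
  have hsub : {i : Fin N | (x : Fin N → F) i ≠ 0} ⊆ ↑(Finset.Ici (⟨K-1, hKN⟩ : Fin N)) := by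
    intro i hi
    simp only [Finset.coe_Ici, Set.mem_Ici]
    by_contra hlt
    have hval : (i : ℕ) < K - 1 := by
      have := not_le.mp hlt
      simpa [Fin.lt_def] using this
    have h0 : (x : Fin N → F) i = 0 := by
      have h := hzero ⟨(i : ℕ), hval⟩
      rwa [show Fin.castLE hle ⟨(i : ℕ), hval⟩ = i from Fin.ext rfl] at h
    exact hi h0
  have hwt : wt (x : Fin N → F) ≤ N - K + 1 := by
    have h1' := Set.ncard_le_ncard hsub (Set.toFinite _)
    rw [Set.ncard_coe_finset, Fin.card_Ici] at h1'
    have h2' : ((⟨K-1, hKN⟩ : Fin N) : ℕ) = K - 1 := rfl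
    rw [h2'] at h1'
    unfold wt
    omega
  exact le_trans (Nat.sInf_le ⟨(x : Fin N → F), x.2, hxvne, rfl⟩) hwt

theorem exists_divisor (F : Type*) [Field F] [Fintype F] (q p : ℕ)
    (hq : Fintype.card F = q) (hp : p.Prime) (hpq : ¬ p ∣ q)
    (hnotprim : orderOf ((q : ZMod p)) ≠ p - 1) (hbig : q + 2 < p) :
    ∃ f : F[X], f.Monic ∧ f ∣ X ^ p - C 1 ∧
      ∃ d : ℕ, f.natDegree = 1 + d ∧ 1 ≤ d ∧ 2 * d ≤ p - 1 := by
  classical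
  haveI : Fact p.Prime := ⟨hp⟩
  have hq2 : 2 ≤ q := hq ▸ Fintype.one_lt_card
  have hp5 : 5 ≤ p := by omega
  have hn : p ≠ 0 := by omega
  haveI : NeZero p := ⟨hn⟩
  -- the order e of q mod p
  have hq0 : (q : ZMod p) ≠ 0 := by
    rw [Ne, ZMod.natCast_eq_zero_iff]; exact hpq
  set e := orderOf ((q : ZMod p)) with he
  set uq : (ZMod p)ˣ := Units.mk0 _ hq0 with huq
  have heu : e = orderOf uq := by rw [he, ← orderOf_units]; rfl
  have hedvd : e ∣ p - 1 := by
    rw [heu]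
    have h := orderOf_dvd_card (G := (ZMod p)ˣ) (x := uq)
    rwa [ZMod.card_units_eq_totient, Nat.totient_prime hp] at h
  have hepos : 0 < e := by rw [heu]; exact orderOf_pos uq
  have h2e : 2 * e ≤ p - 1 := by
    obtain ⟨c, hc⟩ := hedvd
    have hc2 : 2 ≤ c := by
      by_contra hcon
      interval_cases c
      · omega
      · exact hnotprim (by omega)
    calc 2 * e = e * 2 := by ring
      _ ≤ e * c := Nat.mul_le_mul_left e hc2
      _ = p - 1 := hc.symm
  -- q^e ≡ 1 mod p
  have hqe1 : q ^ e % p = 1 := by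
    have h1 : ((q ^ e : ℕ) : ZMod p) = ((1 : ℕ) : ZMod p) := by
      push_cast
      exact pow_orderOf_eq_one _
    have h2 := (ZMod.natCast_eq_natCast_iff _ _ _).mp h1
    have h3 : 1 % p = 1 := Nat.mod_eq_of_lt (by omega)
    unfold Nat.ModEq at h2
    omega
  -- characteristic
  set r := ringChar F with hr
  haveI : CharP F r := ringChar.charP F
  have hrprime : r.Prime := CharP.char_is_prime F r
  haveI : Fact r.Prime := ⟨hrprime⟩
  obtain ⟨k, -, hcard⟩ := FiniteField.card F r
  have hqr : q = r ^ (k : ℕ) := by rw [← hq, hcard]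
  -- algebraic closure
  set K := AlgebraicClosure F with hK
  haveI : CharP K r := charP_of_injective_algebraMap (algebraMap F K).injective r
  have hrp : r ≠ p := by
    intro h
    exact hpq (by rw [hqr, ← h]; exact dvd_pow_self r (by positivity))
  have hpK : (p : K) ≠ 0 := by
    rw [Ne, CharP.cast_eq_zero_iff K r]
    intro hdvd
    exact hrp ((Nat.prime_dvd_prime_iff_eq hrprime hp).mp hdvd)
  -- a nontrivial p-th root of unity
  set Q : K[X] := ∑ i ∈ Finset.range p, X ^ i with hQ
  have hgeom : Q * (X - 1) = X ^ p - 1 := geom_sum_mul X p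
  have hQcoeff : Q.coeff (p - 1) = 1 := by
    rw [hQ, finset_sum_coeff]
    simp only [coeff_X_pow]
    rw [Finset.sum_ite_eq (Finset.range p) (p - 1) (fun _ => (1 : K))]
    rw [if_pos (Finset.mem_range.mpr (by omega))]
  have hQdeg : Q.degree ≠ 0 := by
    have h1 : ((p - 1 : ℕ) : WithBot ℕ) ≤ Q.degree :=
      le_degree_of_ne_zero (by rw [hQcoeff]; exact one_ne_zero)
    intro h0
    rw [h0] at h1
    have h2 : (p - 1 : ℕ) ≤ 0 := by exact_mod_cast h1
    omega
  obtain ⟨ζ, hζQ⟩ := IsAlgClosed.exists_root Q hQdeg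
  have hζp : ζ ^ p = 1 := by
    have h1 : eval ζ (X ^ p - 1) = 0 := by
      rw [← hgeom, eval_mul, show eval ζ Q = 0 from hζQ, zero_mul]
    simp only [eval_sub, eval_pow, eval_X, eval_one] at h1
    rwa [sub_eq_zero] at h1
  have hζ1 : ζ ≠ 1 := by
    intro h
    rw [h] at hζQ
    have h2 : eval 1 Q = (p : K) := by
      rw [hQ, eval_finset_sum]
      simp
    exact hpK (by rw [← h2]; exact hζQ)
  have hζint : IsIntegral F ζ :=
    ⟨X ^ p - C 1, monic_X_pow_sub_C (1:F) hn, by simp [hζp]⟩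
  set g := minpoly F ζ with hg
  set d := g.natDegree with hd
  have hgmonic : g.Monic := minpoly.monic hζint
  have hgirr : Irreducible g := minpoly.irreducible hζint
  have hd1 : 1 ≤ d := minpoly.natDegree_pos hζint
  have hgdvd : g ∣ X ^ p - C 1 := minpoly.dvd F ζ (by simp [hζp])
  -- the fixed subfield of x ↦ x^(q^e)
  set N' := q ^ e with hN'
  have hN2 : 2 ≤ N' := le_trans hq2 (Nat.le_self_pow (by omega) q)
  have hNrp : N' = r ^ ((k : ℕ) * e) := by rw [hN', hqr, ← pow_mul]
  have hfrob : ∀ x y : K, (x + y) ^ N' = x ^ N' + y ^ N' := by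
    intro x y; rw [hNrp]; exact add_pow_char_pow x y r ((k : ℕ) * e)
  have hneg : ∀ x : K, (-x) ^ N' = -(x ^ N') := by
    intro x
    rcases Nat.even_or_odd N' with hev | hod
    · have hr2 : r = 2 := by
        have h2 : Even (r ^ ((k:ℕ)*e)) := hNrp ▸ hev
        rw [Nat.even_pow] at h2
        exact (Nat.Prime.even_iff hrprime).mp h2.1
      have hchar0 : (2 : K) = 0 := by
        have h3 := CharP.cast_eq_zero K r
        rw [hr2] at h3
        exact_mod_cast h3
      have hneg2 : ∀ a : K, -a = a := by
        intro a
        rw [neg_eq_iff_add_eq_zero, ← two_mul, hchar0, zero_mul]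
      rw [hneg2, hneg2]
    · exact hod.neg_pow x
  set S : Subfield K :=
    { carrier := {x : K | x ^ N' = x}
      mul_mem' := by
        intro a b ha hb
        simp only [Set.mem_setOf_eq] at *
        rw [mul_pow, ha, hb]
      one_mem' := by simp
      add_mem' := by
        intro a b ha hb
        simp only [Set.mem_setOf_eq] at *
        rw [hfrob, ha, hb]
      zero_mem' := by
        simp only [Set.mem_setOf_eq]
        exact zero_pow (by omega)
      neg_mem' := by
        intro a ha
        simp only [Set.mem_setOf_eq] at *
        rw [hneg, ha]
      inv_mem' := by
        intro a ha
        simp only [Set.mem_setOf_eq] at *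
        rw [inv_pow, ha] } with hS
  have hFfix : ∀ (j : ℕ) (x : F), x ^ q ^ j = x := by
    intro j
    induction j with
    | zero => intro x; simp
    | succ j ih =>
      intro x
      rw [pow_succ, pow_mul, ih x, ← hq, FiniteField.pow_card]
  have hSF : ∀ x : F, algebraMap F K x ∈ S := by
    intro x
    show (algebraMap F K x) ^ N' = algebraMap F K x
    rw [hN', ← map_pow, hFfix e x]
  set SF : IntermediateField F K := S.toIntermediateField hSF with hSFdef
  have hζS : ζ ∈ S := by
    show ζ ^ N' = ζ
    have h1 : N' % p = 1 := hqe1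
    have hdm := Nat.div_add_mod N' p
    have h2 : N' = p * (N' / p) + 1 := by omega
    calc ζ ^ N' = ζ ^ (p * (N' / p) + 1) := by rw [← h2]
      _ = (ζ ^ p) ^ (N' / p) * ζ := by rw [pow_add, pow_mul, pow_one]
      _ = ζ := by rw [hζp, one_pow, one_mul]
  have hle : F⟮ζ⟯ ≤ SF :=
    IntermediateField.adjoin_le_iff.mpr (Set.singleton_subset_iff.mpr hζS)
  haveI := IntermediateField.adjoin.finiteDimensional hζint
  haveI : Finite ↥F⟮ζ⟯ := Module.finite_of_finite F
  haveI : Fintype ↥F⟮ζ⟯ := Fintype.ofFinite _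
  set P : K[X] := X ^ N' - X with hP
  have hPmonic : P.Monic := by
    apply monic_X_pow_sub
    rw [degree_X]
    exact_mod_cast (by omega : (1:ℕ) < N')
  have hPne : P ≠ 0 := hPmonic.ne_zero
  have hroots : ∀ x : ↥F⟮ζ⟯, (x : K) ∈ P.roots.toFinset := by
    intro x
    rw [Multiset.mem_toFinset, mem_roots hPne]
    have hx : (x : K) ^ N' = (x : K) := hle x.2
    simp [hP, IsRoot, hx]
  have hcard1 : Fintype.card ↥F⟮ζ⟯ ≤ N' := by
    have h1 := Fintype.card_le_of_injective
      (fun x : ↥F⟮ζ⟯ => (⟨(x : K), hroots x⟩ : {y // y ∈ P.roots.toFinset}))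
      (by intro a b hab
          simp only [Subtype.mk.injEq] at hab
          exact Subtype.ext hab)
    rw [Fintype.card_coe] at h1
    have h2 : P.roots.toFinset.card ≤ P.natDegree :=
      le_trans (Multiset.toFinset_card_le _) (card_roots' P)
    have h3 : P.natDegree ≤ N' := by
      refine le_trans (natDegree_sub_le _ _) ?_
      simp only [natDegree_X_pow, natDegree_X]
      omega
    omega
  have hcard2 : Fintype.card ↥F⟮ζ⟯ = q ^ d := by
    rw [Module.card_eq_pow_finrank (K := F) (V := ↥F⟮ζ⟯), hq,
      IntermediateField.adjoin.finrank hζint]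
  have hdle : d ≤ e := by
    rw [hcard2, hN'] at hcard1
    exact (Nat.pow_le_pow_iff_right (by omega)).mp hcard1
  -- the divisor
  have hX1dvd : (X - C (1:F)) ∣ X ^ p - C 1 := dvd_iff_isRoot.mpr (by simp [IsRoot])
  have hnd : ¬(X - C (1:F)) ∣ g := by
    intro hdvd
    have hassoc : Associated (X - C (1:F)) g :=
      (irreducible_X_sub_C (1:F)).associated_of_dvd hgirr hdvd
    have hgeq : g = X - C 1 :=
      eq_of_monic_of_associated hgmonic (monic_X_sub_C 1) hassoc.symm
    have haev : (Polynomial.aeval ζ) g = 0 := minpoly.aeval F ζ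
    rw [hgeq] at haev
    simp only [map_sub, aeval_X, aeval_C, map_one] at haev
    exact hζ1 (by rwa [sub_eq_zero] at haev)
  have hcop : IsCoprime (X - C (1:F)) g :=
    (irreducible_X_sub_C (1:F)).coprime_iff_not_dvd.mpr hnd
  refine ⟨(X - C 1) * g, (monic_X_sub_C 1).mul hgmonic,
    hcop.mul_dvd hX1dvd hgdvd, d, ?_, hd1, by omega⟩
  rw [natDegree_mul (X_sub_C_ne_zero 1) hgmonic.ne_zero, natDegree_X_sub_C]

end MuAux

/-- Assuming the MDS conjecture, if q is not a primitive root modulo p and p > q+2,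
then μ(F_q,p) ≤ p. -/
theorem mu_le_of_MDS_conjecture (q p : ℕ) (F : Type*) [Field F] [Fintype F]
    (hq : Fintype.card F = q) (hp : p.Prime) (hpq : ¬ p ∣ q)
    (hMDS : ∀ (N K : ℕ) (Cd : Submodule F (Fin N → F)),
      Module.finrank F Cd = K → 1 < K → K < N - 1 →
      codeDist Cd = N - K + 1 → N ≤ q + 2)
    (hnotprim : orderOf ((q : ZMod p)) ≠ p - 1)
    (hbig : q + 2 < p) :
    mu F p ≤ p := by
  classical
  have hq2 : 2 ≤ q := hq ▸ Fintype.one_lt_card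
  have hp5 : 5 ≤ p := by omega
  have hn : p ≠ 0 := by omega
  obtain ⟨f, hfmonic, hfdvd, d, hfdeg, hd1, h2d⟩ :=
    MuAux.exists_divisor F q p hq hp hpq hnotprim hbig
  obtain ⟨u, hu⟩ := hfdvd
  have hXn : (X ^ p - C (1:F)).Monic := monic_X_pow_sub_C (1:F) hn
  have humonic : u.Monic := hfmonic.of_mul_monic_left (hu ▸ hXn)
  have hfu : f * u = X ^ p - C 1 := hu.symm
  have hudeg : u.natDegree = p - (1 + d) := by
    have h := hfmonic.natDegree_mul humonic
    rw [hfu, natDegree_X_pow_sub_C, hfdeg] at h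
    omega
  obtain ⟨Cd, hfr, hcd, hdim⟩ := MuAux.key hn f u hfmonic humonic hfu
  set k0 := u.natDegree with hk0
  have hk0b : k0 = p - (1 + d) := hudeg
  have h1k : 1 < k0 := by omega
  have hklt : k0 < p - 1 := by omega
  have hsb : codeDist Cd ≤ p - k0 + 1 :=
    MuAux.singleton_bound Cd hfr (by omega) (by omega)
  have hneq : codeDist Cd ≠ p - k0 + 1 := by
    intro hMDSeq
    have := hMDS p k0 Cd hfr h1k hklt hMDSeq
    omega
  have hcdle : codeDist Cd ≤ p - k0 := by omega
  set I : Ideal (CycRing F p) := Ideal.span {AdjoinRoot.mk (X ^ p - C (1:F)) f} with hI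
  have hmkne : AdjoinRoot.mk (X ^ p - C (1:F)) f ≠ 0 := by
    rw [Ne, AdjoinRoot.mk_eq_zero]
    intro hdvd
    have hdeg : f.degree < (X ^ p - C (1:F)).degree := by
      rw [degree_X_pow_sub_C (Nat.pos_of_ne_zero hn),
        degree_eq_natDegree hfmonic.ne_zero, hfdeg]
      exact_mod_cast (by omega : 1 + d < p)
    exact hfmonic.ne_zero (eq_zero_of_dvd_of_degree_lt hdvd hdeg)
  have hmu : mu F p ≤ cycDist I + cycDim F I :=
    Nat.sInf_le ⟨AdjoinRoot.mk (X ^ p - C (1:F)) f, hmkne, rfl⟩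
  have hfinal : cycDist I + cycDim F I ≤ p := by
    rw [← hcd, hdim]
    omega
  exact le_trans hmu hfinal
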